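/- Let U ⊆ ℝ² be open and connected, let x, x* : U → ℝ³ be twice continuously differentiable and ρ : U → ℝ continuously differentiable and nowhere zero, with x*_u = ρ x_u and x*_v = −ρ x_v on U. Then 2ρ x_{uv} + ρ_v x_u + ρ_u x_v = 0 on U; in particular, at every point x_{uv} lies in the span of {x_u, x_v} and x*_{uv} lies in the span of {x*_u, x*_v}, so (u, v) are common conjugate parameters for x and x*. If moreover B is a symmetric bilinear form on ℝ³ with B(x_u, x_v) = 0 on U, then also B(x*_u, x*_v) = 0, B(x*_u, x*_u) = ρ² B(x_u, x_u) and B(x*_v, x*_v) = ρ² B(x_v, x_v) on U, i.e. (x, x*) is a Christoffel pair with common curvature line parameters (u, v). (Paper: Lemma 3.2.) -/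

import Mathlib

/-- Partial derivative in the `u`-direction. -/
noncomputable def pdu (x : ℝ × ℝ → ℝ × ℝ × ℝ) (p : ℝ × ℝ) : ℝ × ℝ × ℝ :=
  fderiv ℝ x p (1, 0)

/-- Partial derivative in the `v`-direction. -/
noncomputable def pdv (x : ℝ × ℝ → ℝ × ℝ × ℝ) (p : ℝ × ℝ) : ℝ × ℝ × ℝ :=
  fderiv ℝ x p (0, 1)

/-- Mixed second partial derivative `x_{uv}`. -/
noncomputable def pduv (x : ℝ × ℝ → ℝ × ℝ × ℝ) (p : ℝ × ℝ) : ℝ × ℝ × ℝ :=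
  fderiv ℝ (fun q => fderiv ℝ x q (1, 0)) p (0, 1)

/-- Partial derivatives of a scalar function. -/
noncomputable def spdu (f : ℝ × ℝ → ℝ) (p : ℝ × ℝ) : ℝ := fderiv ℝ f p (1, 0)
noncomputable def spdv (f : ℝ × ℝ → ℝ) (p : ℝ × ℝ) : ℝ := fderiv ℝ f p (0, 1)

/-- Evaluation form of the second derivative. -/
lemma fderiv_eval_snd (f : ℝ × ℝ → ℝ × ℝ × ℝ) (p a b : ℝ × ℝ)
    (hf : DifferentiableAt ℝ (fderiv ℝ f) p) :
    fderiv ℝ (fun q => fderiv ℝ f q a) p b = fderiv ℝ (fderiv ℝ f) p b a := by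
  have h := fderiv_clm_apply hf (differentiableAt_const a)
  simp only [fderiv_fun_const, Pi.zero_apply, ContinuousLinearMap.comp_zero, zero_add] at h
  rw [h]; rfl

/-- **Lemma 3.2.** If the differentials of two surfaces `x` and `x*` are related by
`x*_u = ρ x_u`, `x*_v = −ρ x_v`, then `2ρ x_{uv} + ρ_v x_u + ρ_u x_v = 0`, so `(u,v)` are
common conjugate parameters; and if moreover `(u,v)` are orthogonal for some symmetric
bilinear form `B`, then `(x, x*)` is a Christoffel pair with common curvature line
parameters. -/
theorem christoffel_pair_criterion
    (U : Set (ℝ × ℝ)) (hUopen : IsOpen U) (hUconn : IsConnected U)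
    (x xs : ℝ × ℝ → ℝ × ℝ × ℝ) (hx : ContDiffOn ℝ 2 x U) (hxs : ContDiffOn ℝ 2 xs U)
    (ρ : ℝ × ℝ → ℝ) (hρ : ContDiffOn ℝ 1 ρ U) (hρ0 : ∀ p ∈ U, ρ p ≠ 0)
    (hu : ∀ p ∈ U, pdu xs p = ρ p • pdu x p)
    (hv : ∀ p ∈ U, pdv xs p = -(ρ p) • pdv x p) :
    (∀ p ∈ U,
      (2 * ρ p) • pduv x p + spdv ρ p • pdu x p + spdu ρ p • pdv x p = 0) ∧
    (∀ p ∈ U, pduv x p ∈ Submodule.span ℝ {pdu x p, pdv x p}) ∧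
    (∀ p ∈ U, pduv xs p ∈ Submodule.span ℝ {pdu xs p, pdv xs p}) ∧
    (∀ B : LinearMap.BilinForm ℝ (ℝ × ℝ × ℝ), (∀ ξ η, B ξ η = B η ξ) →
      (∀ p ∈ U, B (pdu x p) (pdv x p) = 0) →
      (∀ p ∈ U, B (pdu xs p) (pdv xs p) = 0) ∧
      (∀ p ∈ U, B (pdu xs p) (pdu xs p) = (ρ p) ^ 2 * B (pdu x p) (pdu x p)) ∧
      (∀ p ∈ U, B (pdv xs p) (pdv xs p) = (ρ p) ^ 2 * B (pdv x p) (pdv x p))) := by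
  -- `pduv xs` in terms of `x` data, and the main identity
  have main : ∀ p ∈ U,
      pduv xs p = ρ p • pduv x p + spdv ρ p • pdu x p ∧
      (2 * ρ p) • pduv x p + spdv ρ p • pdu x p + spdu ρ p • pdv x p = 0 := by
    intro p hp
    have hmem : U ∈ nhds p := hUopen.mem_nhds hp
    have hx2 : ContDiffAt ℝ 2 x p := hx.contDiffAt hmem
    have hxs2 : ContDiffAt ℝ 2 xs p := hxs.contDiffAt hmem
    have hρd : DifferentiableAt ℝ ρ p := (hρ.contDiffAt hmem).differentiableAt one_ne_zero
    have hDx : DifferentiableAt ℝ (fderiv ℝ x) p :=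
      (hx2.fderiv_right (m := 1) (by norm_num)).differentiableAt one_ne_zero
    have hDxs : DifferentiableAt ℝ (fderiv ℝ xs) p :=
      (hxs2.fderiv_right (m := 1) (by norm_num)).differentiableAt one_ne_zero
    have hgu : DifferentiableAt ℝ (fun q => fderiv ℝ x q ((1 : ℝ), (0 : ℝ))) p :=
      hDx.clm_apply (differentiableAt_const _)
    have hgv : DifferentiableAt ℝ (fun q => fderiv ℝ x q ((0 : ℝ), (1 : ℝ))) p :=
      hDx.clm_apply (differentiableAt_const _)
    have hsx : IsSymmSndFDerivAt ℝ x p := hx2.isSymmSndFDerivAt (by norm_num)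
    have hsxs : IsSymmSndFDerivAt ℝ xs p := hxs2.isSymmSndFDerivAt (by norm_num)
    -- eventual equality of the partials
    have heu : (fun q => fderiv ℝ xs q ((1 : ℝ), (0 : ℝ)))
        =ᶠ[nhds p] fun q => ρ q • fderiv ℝ x q (1, 0) := by
      filter_upwards [hmem] with q hq
      simpa [pdu] using hu q hq
    have hev : (fun q => fderiv ℝ xs q ((0 : ℝ), (1 : ℝ)))
        =ᶠ[nhds p] fun q => -(ρ q) • fderiv ℝ x q (0, 1) := by
      filter_upwards [hmem] with q hq
      simpa [pdv] using hv q hq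
    -- E1 : A (0,1) (1,0) = ρ p • pduv x p + spdv ρ p • pdu x p
    have E1 : fderiv ℝ (fderiv ℝ xs) p (0, 1) (1, 0)
        = ρ p • pduv x p + spdv ρ p • pdu x p := by
      rw [← fderiv_eval_snd xs p (1, 0) (0, 1) hDxs, heu.fderiv_eq,
        fderiv_fun_smul hρd hgu]
      rfl
    -- E2 : A (1,0) (0,1) = -(ρ p) • pduv x p - spdu ρ p • pdv x p
    have E2 : fderiv ℝ (fderiv ℝ xs) p (1, 0) (0, 1)
        = -(ρ p) • pduv x p - spdu ρ p • pdv x p := by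
      rw [← fderiv_eval_snd xs p (0, 1) (1, 0) hDxs, hev.fderiv_eq,
        fderiv_fun_smul (c := fun q => -(ρ q)) (hρd.neg) hgv]
      have hxsymm : fderiv ℝ (fun q => fderiv ℝ x q ((0 : ℝ), (1 : ℝ))) p (1, 0)
          = pduv x p := by
        rw [fderiv_eval_snd x p (0, 1) (1, 0) hDx, hsx (1, 0) (0, 1),
          ← fderiv_eval_snd x p (1, 0) (0, 1) hDx]
        rfl
      have hneg : fderiv ℝ (fun q => -(ρ q)) p = -(fderiv ℝ ρ p) := by
        simpa using fderiv_neg (f := ρ) (x := p)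
      simp only [ContinuousLinearMap.add_apply, ContinuousLinearMap.smul_apply,
        ContinuousLinearMap.smulRight_apply, hneg, ContinuousLinearMap.neg_apply,
        hxsymm, spdu, pdv, neg_smul, sub_eq_add_neg]
    have hsym : fderiv ℝ (fderiv ℝ xs) p (0, 1) (1, 0)
        = fderiv ℝ (fderiv ℝ xs) p (1, 0) (0, 1) := hsxs (0, 1) (1, 0)
    constructor
    · rw [show pduv xs p = fderiv ℝ (fderiv ℝ xs) p (0, 1) (1, 0) from
        fderiv_eval_snd xs p (1, 0) (0, 1) hDxs, E1]
    · have h := E1.symm.trans (hsym.trans E2)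
      linear_combination (norm := module) h
  have key : ∀ p ∈ U,
      (2 * ρ p) • pduv x p + spdv ρ p • pdu x p + spdu ρ p • pdv x p = 0 :=
    fun p hp => (main p hp).2
  have star : ∀ p ∈ U, pduv xs p = ρ p • pduv x p + spdv ρ p • pdu x p :=
    fun p hp => (main p hp).1
  -- span membership for x
  have span1 : ∀ p ∈ U, pduv x p ∈ Submodule.span ℝ {pdu x p, pdv x p} := by
    intro p hp
    have h2 : (2 * ρ p) ≠ 0 := mul_ne_zero two_ne_zero (hρ0 p hp)
    have hmu : pdu x p ∈ Submodule.span ℝ {pdu x p, pdv x p} :=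
      Submodule.subset_span (Set.mem_insert _ _)
    have hmv : pdv x p ∈ Submodule.span ℝ {pdu x p, pdv x p} :=
      Submodule.subset_span (Set.mem_insert_of_mem _ rfl)
    have hmem : (2 * ρ p) • pduv x p ∈ Submodule.span ℝ {pdu x p, pdv x p} := by
      have hrw : (2 * ρ p) • pduv x p
          = -(spdv ρ p • pdu x p) - spdu ρ p • pdv x p := by
        linear_combination (norm := module) key p hp
      rw [hrw]
      exact sub_mem (neg_mem (Submodule.smul_mem _ _ hmu)) (Submodule.smul_mem _ _ hmv)
    have : pduv x p = (2 * ρ p)⁻¹ • ((2 * ρ p) • pduv x p) := by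
      rw [smul_smul, inv_mul_cancel₀ h2, one_smul]
    rw [this]
    exact Submodule.smul_mem _ _ hmem
  refine ⟨key, span1, ?_, ?_⟩
  · -- span membership for xs
    intro p hp
    have hρp := hρ0 p hp
    have hmu : pdu x p ∈ Submodule.span ℝ {pdu xs p, pdv xs p} := by
      have : pdu x p = (ρ p)⁻¹ • pdu xs p := by
        rw [hu p hp, smul_smul, inv_mul_cancel₀ hρp, one_smul]
      rw [this]
      exact Submodule.smul_mem _ _ (Submodule.subset_span (Set.mem_insert _ _))
    have hmv : pdv x p ∈ Submodule.span ℝ {pdu xs p, pdv xs p} := by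
      have : pdv x p = (-(ρ p))⁻¹ • pdv xs p := by
        rw [hv p hp, smul_smul, inv_mul_cancel₀ (neg_ne_zero.mpr hρp), one_smul]
      rw [this]
      exact Submodule.smul_mem _ _ (Submodule.subset_span (Set.mem_insert_of_mem _ rfl))
    have hle : Submodule.span ℝ {pdu x p, pdv x p} ≤ Submodule.span ℝ {pdu xs p, pdv xs p} := by
      rw [Submodule.span_le]
      intro z hz
      rcases hz with rfl | hz
      · exact hmu
      · rw [Set.mem_singleton_iff] at hz; subst hz; exact hmv
    rw [star p hp]
    exact add_mem (Submodule.smul_mem _ _ (hle (span1 p hp))) (Submodule.smul_mem _ _ hmu)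
  · -- bilinear forms
    intro B hBsymm hB0
    refine ⟨?_, ?_, ?_⟩
    · intro p hp
      rw [hu p hp, hv p hp]
      simp [hB0 p hp]
    · intro p hp
      rw [hu p hp]
      simp [smul_eq_mul]
      ring
    · intro p hp
      rw [hv p hp]
      simp [smul_eq_mul]
      ring
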